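/- Assume the fiberwise zero-mean condition. Then for every baseline b : F → ℝ, E[g(b)] = ∑_{ω} p(ω) · Q(ω) • z(ω). In particular E[g(b)] = E[g(b')] for any two baselines b, b' : F → ℝ, so subtracting a baseline that is constant on the fibers of φ does not change the expectation of the off-policy policy gradient estimator. -/

import Mathlib

open Finset

/-- Remark 1, Eq. (16): under the fiberwise zero-mean condition, subtracting a
baseline that is constant on the fibers of `φ` does not change the expectation
of the off-policy policy gradient estimator:
`E[g(b)] = ∑ ω, p ω • Q ω • z ω` for every baseline `b`, and in particular
`E[g(b)] = E[g(b')]` for any two baselines. -/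
theorem offpolicy_baseline_expectation_invariant
    {Ω : Type*} [Fintype Ω] [Nonempty Ω]
    {E : Type*} [NormedAddCommGroup E] [InnerProductSpace ℝ E] [FiniteDimensional ℝ E]
    {F : Type*} [Fintype F] [DecidableEq F]
    (p : Ω → ℝ) (hp0 : ∀ ω, 0 ≤ p ω) (hp1 : ∑ ω, p ω = 1)
    (z : Ω → E) (Q : Ω → ℝ) (φ : Ω → F)
    (hzm : ∀ f : F, ∑ ω ∈ univ.filter (fun ω => φ ω = f), p ω • z ω = 0) :
    (∀ b : F → ℝ,
        ∑ ω, p ω • ((Q ω - b (φ ω)) • z ω) = ∑ ω, (p ω * Q ω) • z ω)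
    ∧ (∀ b b' : F → ℝ,
        ∑ ω, p ω • ((Q ω - b (φ ω)) • z ω)
          = ∑ ω, p ω • ((Q ω - b' (φ ω)) • z ω)) := by
  have key : ∀ b : F → ℝ,
      ∑ ω, p ω • ((Q ω - b (φ ω)) • z ω) = ∑ ω, (p ω * Q ω) • z ω := by
    intro b
    have hb : ∑ ω, b (φ ω) • (p ω • z ω) = 0 := by
      rw [← Finset.sum_fiberwise (g := φ) (f := fun ω => b (φ ω) • (p ω • z ω))]
      refine Finset.sum_eq_zero fun f _ => ?_
      have : ∑ ω ∈ univ.filter (fun ω => φ ω = f), b (φ ω) • (p ω • z ω)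
          = b f • ∑ ω ∈ univ.filter (fun ω => φ ω = f), p ω • z ω := by
        rw [Finset.smul_sum]
        refine Finset.sum_congr rfl fun ω hω => ?_
        rw [Finset.mem_filter] at hω
        rw [hω.2]
      rw [this, hzm f, smul_zero]
    calc ∑ ω, p ω • ((Q ω - b (φ ω)) • z ω)
        = ∑ ω, ((p ω * Q ω) • z ω - b (φ ω) • (p ω • z ω)) := by
          refine Finset.sum_congr rfl fun ω _ => ?_
          rw [sub_smul, smul_sub, mul_smul, smul_comm (b (φ ω)) (p ω)]
      _ = ∑ ω, (p ω * Q ω) • z ω - ∑ ω, b (φ ω) • (p ω • z ω) := Finset.sum_sub_distrib _ _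
      _ = ∑ ω, (p ω * Q ω) • z ω := by rw [hb, sub_zero]
  exact ⟨key, fun b b' => (key b).trans (key b').symm⟩
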